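/- Let T : X → X be a bounded linear operator on an infinite dimensional complex Banach space X such that the set ⋂_{x∈X} D(x,T) has non-empty interior. Then for every non-zero complex polynomial P, the operator P(T) has dense range. -/

import Mathlib

open Filter Topology

variable {X : Type*} [NormedAddCommGroup X] [NormedSpace ℂ X]

/-- The orbit of `x` under `T`. -/
def orbitSet (T : X →L[ℂ] X) (x : X) : Set X := Set.range fun n : ℕ => (T ^ n) x

/-- The coarse orbit of `x` under `T` with respect to `d`. -/
def coarseOrbit (T : X →L[ℂ] X) (x : X) (d : ℝ) : Set X :=
  {y | ∃ n : ℕ, ‖(T ^ n) x - y‖ < d}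

/-- The extended (prolongational) limit set `J(x,T)`. -/
def jSet (T : X →L[ℂ] X) (x : X) : Set X :=
  {y | ∃ k : ℕ → ℕ, StrictMono k ∧ (∀ n, 0 < k n) ∧
    ∃ u : ℕ → X, Tendsto u atTop (𝓝 x) ∧
      Tendsto (fun n => (T ^ k n) (u n)) atTop (𝓝 y)}

/-- The coarse extended limit set `J(x,T,d)`. -/
def jCoarse (T : X →L[ℂ] X) (x : X) (d : ℝ) : Set X :=
  {y | ∃ k : ℕ → ℕ, StrictMono k ∧ (∀ n, 0 < k n) ∧
    ∃ u : ℕ → X, Tendsto u atTop (𝓝 x) ∧ ∀ n, ‖(T ^ k n) (u n) - y‖ < d}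

/-- The extended mixing limit set `J^{mix}(x,T)`. -/
def jMix (T : X →L[ℂ] X) (x : X) : Set X :=
  {y | ∃ u : ℕ → X, Tendsto u atTop (𝓝 x) ∧
    Tendsto (fun n => (T ^ n) (u n)) atTop (𝓝 y)}

/-- The coarse extended mixing limit set `J^{mix}(x,T,d)`. -/
def jMixCoarse (T : X →L[ℂ] X) (x : X) (d : ℝ) : Set X :=
  {y | ∃ u : ℕ → X, Tendsto u atTop (𝓝 x) ∧ ∀ n, ‖(T ^ n) (u n) - y‖ < d}

/-- The prolongation `D(x,T) = O(x,T) ∪ J(x,T)`. -/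
def dSet (T : X →L[ℂ] X) (x : X) : Set X := orbitSet T x ∪ jSet T x

/-- The coarse prolongation `D(x,T,d) = O(x,T,d) ∪ J(x,T,d)`. -/
def dCoarse (T : X →L[ℂ] X) (x : X) (d : ℝ) : Set X :=
  coarseOrbit T x d ∪ jCoarse T x d

/-- The coarse mixing prolongation `D^{mix}(x,T,d)`. -/
def dMixCoarse (T : X →L[ℂ] X) (x : X) (d : ℝ) : Set X :=
  coarseOrbit T x d ∪ jMixCoarse T x d

/-- An open cone: a nonempty open set invariant under positive scalar multiplication. -/
def IsOpenCone (C : Set X) : Prop :=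
  IsOpen C ∧ C.Nonempty ∧ ∀ x ∈ C, ∀ r : ℝ, 0 < r → (r : ℂ) • x ∈ C

lemma exists_functional_of_not_denseRange {A : X →L[ℂ] X} (h : ¬ DenseRange A) :
    ∃ φ : X →L[ℂ] ℂ, φ ≠ 0 ∧ ∀ z, φ (A z) = 0 := by
  set S : Submodule ℂ X := (LinearMap.range (A : X →ₗ[ℂ] X)).topologicalClosure with hS
  haveI : IsClosed (S : Set X) := Submodule.isClosed_topologicalClosure _
  have hne : S ≠ ⊤ := by
    intro htop
    apply h
    rw [DenseRange, dense_iff_closure_eq]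
    have h1 : closure (Set.range ⇑A) = (S : Set X) := by
      rw [hS, Submodule.topologicalClosure_coe, LinearMap.coe_range]
      rfl
    rw [h1, htop, Submodule.top_coe]
  obtain ⟨x, hx⟩ : ∃ x, x ∉ S := by
    by_contra hc
    push_neg at hc
    exact hne (Submodule.eq_top_iff'.2 hc)
  have hmk : (Submodule.Quotient.mk x : X ⧸ S) ≠ 0 := by
    simpa [Submodule.Quotient.mk_eq_zero] using hx
  obtain ⟨g, -, hg⟩ := exists_dual_vector ℂ (Submodule.Quotient.mk x : X ⧸ S) (norm_ne_zero_iff.2 hmk)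
  let mkCLM : X →L[ℂ] X ⧸ S :=
    LinearMap.mkContinuous S.mkQ 1 (fun m => by
      simpa using Submodule.Quotient.norm_mk_le S m)
  refine ⟨g.comp mkCLM, ?_, ?_⟩
  · intro h0
    have : g (Submodule.Quotient.mk x : X ⧸ S) = 0 := by
      have := congrArg (fun f => f x) h0
      simpa [mkCLM] using this
    rw [hg] at this
    exact hmk (norm_eq_zero.1 (RCLike.ofReal_eq_zero.1 this))
  · intro z
    have hz : (Submodule.Quotient.mk (A z) : X ⧸ S) = 0 := by
      rw [Submodule.Quotient.mk_eq_zero]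
      exact Submodule.le_topologicalClosure _ (LinearMap.mem_range_self _ z)
    simp [mkCLM, hz]

lemma denseRange_sub_smul_one (hinf : ¬ FiniteDimensional ℂ X)
    (T : X →L[ℂ] X)
    (hint : (interior (⋂ x : X, dSet T x)).Nonempty) (lam : ℂ) :
    DenseRange ((T - lam • (1 : X →L[ℂ] X)) : X →L[ℂ] X) := by
  haveI : Nontrivial X := by
    by_contra hnt
    rw [not_nontrivial_iff_subsingleton] at hnt
    exact hinf Module.Finite.of_finite
  by_contra hnd
  obtain ⟨φ, hφ0, hφ⟩ := exists_functional_of_not_denseRange hnd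
  have hT : ∀ z, φ (T z) = lam * φ z := by
    intro z
    have := hφ z
    simp only [ContinuousLinearMap.sub_apply, ContinuousLinearMap.smul_apply,
      ContinuousLinearMap.one_apply, map_sub, map_smul, smul_eq_mul] at this
    linear_combination this
  have hpow : ∀ (n : ℕ) (z : X), φ ((T ^ n) z) = lam ^ n * φ z := by
    intro n
    induction n with
    | zero => intro z; simp
    | succ n ih =>
      intro z
      rw [pow_succ, ContinuousLinearMap.mul_apply, ih, hT, pow_succ]
      ring
  obtain ⟨y₀, hy₀⟩ := hint
  rcases le_or_gt ‖lam‖ 1 with h1 | h1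
  · -- |λ| ≤ 1 : D(0,T) ⊆ ker φ
    have hker : dSet T 0 ⊆ (LinearMap.ker (φ : X →ₗ[ℂ] ℂ) : Set X) := by
      rintro y (⟨n, rfl⟩ | ⟨k, hk, hkpos, u, hu, hTu⟩)
      · simp [LinearMap.mem_ker]
      · have h2 : Tendsto (fun n => φ ((T ^ k n) (u n))) atTop (𝓝 (φ y)) :=
          (φ.continuous.tendsto y).comp hTu
        have h3 : Tendsto (fun n => φ ((T ^ k n) (u n))) atTop (𝓝 0) := by
          have hb : Tendsto (fun n => ‖φ (u n)‖) atTop (𝓝 0) := by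
            have := ((φ.continuous.tendsto 0).comp hu).norm
            simpa using this
          apply squeeze_zero_norm _ hb
          intro n
          rw [hpow, norm_mul, norm_pow]
          calc ‖lam‖ ^ k n * ‖φ (u n)‖ ≤ 1 * ‖φ (u n)‖ := by
                apply mul_le_mul_of_nonneg_right (pow_le_one₀ (norm_nonneg _) h1)
                  (norm_nonneg _)
            _ = ‖φ (u n)‖ := one_mul _
        have : φ y = 0 := tendsto_nhds_unique h2 h3
        simpa [LinearMap.mem_ker] using this
    have hsub : interior (⋂ x : X, dSet T x) ⊆ interior (LinearMap.ker (φ : X →ₗ[ℂ] ℂ) : Set X) :=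
      interior_mono ((Set.iInter_subset _ 0).trans hker)
    have : LinearMap.ker (φ : X →ₗ[ℂ] ℂ) = ⊤ := by
      apply Submodule.eq_top_of_nonempty_interior'
      exact ⟨y₀, hsub hy₀⟩
    apply hφ0
    ext z
    have : z ∈ LinearMap.ker (φ : X →ₗ[ℂ] ℂ) := this ▸ Submodule.mem_top
    simpa [LinearMap.mem_ker] using this
  · -- |λ| > 1
    have hlam0 : lam ≠ 0 := by
      intro h; rw [h, norm_zero] at h1; linarith
    obtain ⟨x₁, hx₁⟩ : ∃ x₁, φ x₁ ≠ 0 := by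
      by_contra hc
      push_neg at hc
      exact hφ0 (by ext z; simpa using hc z)
    have hJ : jSet T x₁ = ∅ := by
      rw [Set.eq_empty_iff_forall_notMem]
      rintro y ⟨k, hk, hkpos, u, hu, hTu⟩
      have h2 : Tendsto (fun n => φ ((T ^ k n) (u n))) atTop (𝓝 (φ y)) :=
        (φ.continuous.tendsto y).comp hTu
      have hinv : Tendsto (fun n => (lam⁻¹) ^ k n) atTop (𝓝 0) := by
        have h4 : Tendsto (fun m : ℕ => (lam⁻¹) ^ m) atTop (𝓝 0) := by
          apply tendsto_pow_atTop_nhds_zero_of_norm_lt_one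
          rw [norm_inv]
          exact inv_lt_one_of_one_lt₀ h1
        exact h4.comp hk.tendsto_atTop
      have h5 : Tendsto (fun n => (lam⁻¹) ^ k n * φ ((T ^ k n) (u n))) atTop (𝓝 0) := by
        simpa using hinv.mul h2
      have h6 : (fun n => (lam⁻¹) ^ k n * φ ((T ^ k n) (u n))) = fun n => φ (u n) := by
        funext n
        rw [hpow, inv_pow, inv_mul_cancel_left₀ (pow_ne_zero _ hlam0)]
      rw [h6] at h5
      have h7 : Tendsto (fun n => φ (u n)) atTop (𝓝 (φ x₁)) :=
        (φ.continuous.tendsto x₁).comp hu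
      exact hx₁ (tendsto_nhds_unique h7 h5)
    have hcnt : (dSet T x₁).Countable := by
      rw [dSet, hJ, Set.union_empty]
      exact Set.countable_range _
    have hemp : interior (dSet T x₁) = ∅ :=
      interior_eq_empty_iff_dense_compl.2 (hcnt.dense_compl ℂ)
    have : y₀ ∈ interior (dSet T x₁) :=
      interior_mono (Set.iInter_subset _ x₁) hy₀
    rw [hemp] at this
    exact this

lemma denseRange_aeval_of_natDegree_le (hinf : ¬ FiniteDimensional ℂ X)
    (T : X →L[ℂ] X) (hint : (interior (⋂ x : X, dSet T x)).Nonempty) :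
    ∀ (n : ℕ) (P : Polynomial ℂ), P ≠ 0 → P.natDegree ≤ n →
      DenseRange (Polynomial.aeval T P : X →L[ℂ] X) := by
  intro n
  induction n with
  | zero =>
    intro P hP hdeg
    have hc : P = Polynomial.C (P.coeff 0) :=
      Polynomial.eq_C_of_natDegree_eq_zero (Nat.le_zero.1 hdeg)
    have hc0 : P.coeff 0 ≠ 0 := by
      intro h; apply hP; rw [hc, h, map_zero]
    have : (Polynomial.aeval T P : X →L[ℂ] X) = P.coeff 0 • (1 : X →L[ℂ] X) := by
      rw [hc]; simp [Polynomial.aeval_C, Algebra.algebraMap_eq_smul_one]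
    rw [this]
    apply Function.Surjective.denseRange
    intro y
    exact ⟨(P.coeff 0)⁻¹ • y, by
      simp [smul_smul, inv_mul_cancel₀ hc0]⟩
  | succ n ih =>
    intro P hP hdeg
    by_cases h0 : P.natDegree = 0
    · exact ih P hP (by omega)
    have hdpos : 0 < P.degree := Polynomial.natDegree_pos_iff_degree_pos.1 (Nat.pos_of_ne_zero h0)
    obtain ⟨z, hz⟩ := Complex.exists_root hdpos
    obtain ⟨Q, hQ⟩ := (Polynomial.dvd_iff_isRoot.2 hz)
    have hQ0 : Q ≠ 0 := by
      intro h; apply hP; rw [hQ, h, mul_zero]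
    have hQdeg : Q.natDegree ≤ n := by
      have hX : (Polynomial.X - Polynomial.C z) ≠ 0 := Polynomial.X_sub_C_ne_zero z
      have := Polynomial.natDegree_mul hX hQ0
      rw [← hQ, Polynomial.natDegree_X_sub_C] at this
      omega
    have hfac : (Polynomial.aeval T P : X →L[ℂ] X) =
        (T - z • (1 : X →L[ℂ] X)) * (Polynomial.aeval T Q : X →L[ℂ] X) := by
      rw [hQ, map_mul]
      congr 1
      simp [Algebra.algebraMap_eq_smul_one]
    rw [hfac]
    have h1 : DenseRange ((T - z • (1 : X →L[ℂ] X)) : X →L[ℂ] X) :=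
      denseRange_sub_smul_one hinf T hint z
    have h2 : DenseRange (Polynomial.aeval T Q : X →L[ℂ] X) := ih Q hQ0 hQdeg
    have : ⇑((T - z • (1 : X →L[ℂ] X)) * (Polynomial.aeval T Q : X →L[ℂ] X)) =
        ⇑(T - z • (1 : X →L[ℂ] X)) ∘ ⇑(Polynomial.aeval T Q : X →L[ℂ] X) := rfl
    rw [this]
    exact h1.comp h2 (T - z • (1 : X →L[ℂ] X)).continuous

theorem denseRange_poly_of_dSet_interior [CompleteSpace X]
    (hinf : ¬ FiniteDimensional ℂ X)
    (T : X →L[ℂ] X) (hint : (interior (⋂ x : X, dSet T x)).Nonempty)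
    (P : Polynomial ℂ) (hP : P ≠ 0) :
    DenseRange (Polynomial.aeval T P : X →L[ℂ] X) :=
  denseRange_aeval_of_natDegree_le hinf T hint P.natDegree P hP le_rfl
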